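/- Let F be a field and n ≥ 3. There is a constant C_n, depending only on n, with the following property: if 𝔏 is a finite collection of lines in F^n and K is a nonempty subset of the set of joints of 𝔏, then there exists a line l ∈ 𝔏 such that |l ∩ K| ≤ C_n · |K|^{1/n}. -/

import Mathlib

/-- A line in `F^n`: a set of the form `{v + t • b : t ∈ F}` with `b ≠ 0`. -/
def IsLine (F : Type*) [Field F] {n : ℕ} (l : Set (Fin n → F)) : Prop :=
  ∃ v b : Fin n → F, b ≠ 0 ∧ l = {x | ∃ t : F, x = v + t • b}

/-- `b` is a direction of the line `l`. -/
def IsDirection (F : Type*) [Field F] {n : ℕ} (b : Fin n → F) (l : Set (Fin n → F)) : Prop :=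
  b ≠ 0 ∧ ∃ v : Fin n → F, l = {x | ∃ t : F, x = v + t • b}

/-- The lines `l 0, …, l (n-1)` form a joint at `x`: each passes through `x` and
their directions span `F^n`. -/
def FormsJoint (F : Type*) [Field F] {n : ℕ} (l : Fin n → Set (Fin n → F))
    (x : Fin n → F) : Prop :=
  (∀ i, x ∈ l i) ∧ ∃ b : Fin n → Fin n → F,
    (∀ i, IsDirection F (b i) (l i)) ∧ Submodule.span F (Set.range b) = ⊤

/-- `x` is a joint of the collection `𝔏`: there are (at least) `n` distinct lines of `𝔏`
through `x` whose directions span `F^n`. -/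
def IsJoint (F : Type*) [Field F] {n : ℕ} (𝔏 : Set (Set (Fin n → F)))
    (x : Fin n → F) : Prop :=
  ∃ l : Fin n → Set (Fin n → F), Function.Injective l ∧ (∀ i, l i ∈ 𝔏) ∧ FormsJoint F l x

/-- The multiplicity `N(x)`: the number of `n`-tuples of lines of `𝔏` forming a joint at `x`. -/
noncomputable def jointMult (F : Type*) [Field F] {n : ℕ} (𝔏 : Set (Set (Fin n → F)))
    (x : Fin n → F) : ℕ :=
  Set.ncard {l : Fin n → Set (Fin n → F) | (∀ i, l i ∈ 𝔏) ∧ FormsJoint F l x}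

/-- `𝔏` is generic: whenever `n` distinct lines of `𝔏` pass through a common point,
they form a joint there. -/
def Generic (F : Type*) [Field F] {n : ℕ} (𝔏 : Set (Set (Fin n → F))) : Prop :=
  ∀ (l : Fin n → Set (Fin n → F)) (x : Fin n → F), Function.Injective l →
    (∀ i, l i ∈ 𝔏) → (∀ i, x ∈ l i) → FormsJoint F l x

namespace JL

open MvPolynomial

variable {F : Type*} [Field F] {n : ℕ}

/-- the line through `v` with direction `b` -/
def L (v b : Fin n → F) : Set (Fin n → F) := {x | ∃ t : F, x = v + t • b}

lemma L_eq_of_mem {v b : Fin n → F} {x y : Fin n → F}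
    (hx : x ∈ L v b) (hy : y ∈ L v b) (hxy : x ≠ y) :
    L v b = L x (y - x) := by
  obtain ⟨s, rfl⟩ := hx
  obtain ⟨u, rfl⟩ := hy
  have hsu : u - s ≠ 0 := by
    intro h
    apply hxy
    have : u = s := by linear_combination (norm := ring_nf) h
    rw [this]
  have hyx : (v + u • b) - (v + s • b) = (u - s) • b := by
    rw [sub_smul]; abel
  ext z
  constructor
  · rintro ⟨t, rfl⟩
    refine ⟨(t - s)/(u - s), ?_⟩
    rw [hyx, smul_smul, div_mul_cancel₀ _ hsu, sub_smul]
    abel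
  · rintro ⟨t, rfl⟩
    refine ⟨s + t * (u - s), ?_⟩
    rw [hyx, smul_smul, add_smul]
    abel

lemma inter_subsingleton {v b v' b' : Fin n → F}
    (hne : L v b ≠ L v' b') : Set.Subsingleton (L v b ∩ L v' b') := by
  rintro x ⟨hx, hx'⟩ y ⟨hy, hy'⟩
  by_contra hxy
  exact hne ((L_eq_of_mem hx hy hxy).trans (L_eq_of_mem hx' hy' hxy).symm)


lemma K_finite (hn : 3 ≤ n) (𝔏 : Finset (Set (Fin n → F)))
    (hlines : ∀ l ∈ 𝔏, IsLine F l) (K : Set (Fin n → F))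
    (hK : ∀ x ∈ K, IsJoint F ↑𝔏 x) : K.Finite := by
  classical
  have hsub : K ⊆ ⋃ p ∈ (↑(𝔏 ×ˢ 𝔏) : Set (Set (Fin n → F) × Set (Fin n → F))),
      (fun p : Set (Fin n → F) × Set (Fin n → F) =>
        if p.1 = p.2 then (∅ : Set (Fin n → F)) else p.1 ∩ p.2) p := by
    intro x hx
    obtain ⟨l, hinj, hmem, hxl, -⟩ := hK x hx
    set i0 : Fin n := ⟨0, by omega⟩
    set i1 : Fin n := ⟨1, by omega⟩
    refine Set.mem_biUnion (show ((l i0, l i1) : _ × _) ∈ (↑(𝔏 ×ˢ 𝔏) : Set _) by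
      simp [Finset.mem_product, hmem i0, hmem i1]) ?_
    have hne : l i0 ≠ l i1 := fun h => by
      have := hinj h
      exact absurd (congrArg Fin.val this) (by simp)
    simp only [if_neg hne]
    exact ⟨hxl i0, hxl i1⟩
  refine Set.Finite.subset (Set.Finite.biUnion (Finset.finite_toSet _) ?_) hsub
  rintro ⟨l₁, l₂⟩ hp
  simp only [Finset.coe_product, Set.mem_prod, Finset.mem_coe] at hp
  by_cases h : l₁ = l₂
  · simp [h]
  · simp only [if_neg h]
    obtain ⟨v, b, hb, rfl⟩ := hlines l₁ hp.1
    obtain ⟨v', b', hb', rfl⟩ := hlines l₂ hp.2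
    exact Set.Subsingleton.finite (inter_subsingleton (v := v) (b := b) (v' := v') (b' := b') h)

lemma det_ne_zero_of_span {b : Fin n → Fin n → F}
    (h : Submodule.span F (Set.range b) = ⊤) : (Matrix.of b).det ≠ 0 := by
  intro hdet
  obtain ⟨g, hg, hgz⟩ := Matrix.exists_vecMul_eq_zero_iff.mpr hdet
  have hsurj : Function.Surjective (Matrix.of b).vecMulLinear := by
    rw [← LinearMap.range_eq_top, range_vecMulLinear]
    exact h
  have hinj := LinearMap.injective_iff_surjective.mpr hsurj
  exact hg (hinj (show (Matrix.of b).vecMulLinear g = (Matrix.of b).vecMulLinear 0 by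
    rw [map_zero]; exact hgz))

lemma row_ne_zero {b : Fin n → Fin n → F} (hdet : (Matrix.of b).det ≠ 0) (i : Fin n) :
    b i ≠ 0 := by
  intro h
  exact hdet (Matrix.det_eq_zero_of_row_eq_zero i (fun j => congrFun h j))

lemma vec_eq_zero {b : Fin n → Fin n → F} (hdet : (Matrix.of b).det ≠ 0) {g : Fin n → F}
    (h : ∀ i, ∑ j, b i j * g j = 0) : g = 0 := by
  by_contra hg
  exact hdet (Matrix.exists_mulVec_eq_zero_iff.mp
    ⟨g, hg, funext fun i => by simpa [Matrix.mulVec, dotProduct] using h i⟩)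

/-- existence of a low-degree polynomial vanishing on a small finite set -/
lemma exists_low_degree_vanishing (hn : 0 < n) (m : ℕ) (K : Set (Fin n → F))
    (hK : K.Finite) (hcard : K.ncard < (m + 1) ^ n) :
    ∃ p : MvPolynomial (Fin n) F, p ≠ 0 ∧ p.totalDegree ≤ n * m ∧
      ∀ x ∈ K, eval x p = 0 := by
  classical
  set ι := Fin n → Fin (m + 1)
  set KF := hK.toFinset
  set T : (ι → F) →ₗ[F] ({x // x ∈ KF} → F) :=
    { toFun := fun c x => ∑ f : ι, c f * ∏ i, (x.1 i) ^ (f i : ℕ)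
      map_add' := by
        intro c c'
        funext x
        simp [add_mul, Finset.sum_add_distrib]
      map_smul' := by
        intro a c
        funext x
        simp [Finset.mul_sum, mul_assoc] }
  have hni : ¬ Function.Injective T := by
    intro hinj
    have h1 := LinearMap.finrank_le_finrank_of_injective hinj
    rw [Module.finrank_fintype_fun_eq_card, Module.finrank_fintype_fun_eq_card,
      Fintype.card_fun, Fintype.card_coe, Fintype.card_fin, Fintype.card_fin] at h1
    have h2 : K.ncard = KF.card := Set.ncard_eq_toFinset_card K hK
    omega
  rw [Function.not_injective_iff] at hni
  obtain ⟨c₁, c₂, hcc, hne⟩ := hni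
  set c := c₁ - c₂ with hc
  have hc0 : c ≠ 0 := sub_ne_zero.mpr hne
  have hTc : T c = 0 := by rw [map_sub, hcc, sub_self]
  set toExp : ι → (Fin n →₀ ℕ) := fun f => Finsupp.equivFunOnFinite.symm (fun i => (f i : ℕ))
  have htoExp_apply : ∀ (f : ι) (i : Fin n), toExp f i = (f i : ℕ) := fun f i => rfl
  have htoExp_inj : Function.Injective toExp := by
    intro f g h
    funext i
    exact Fin.val_injective (congrFun (congrArg (fun (u : Fin n →₀ ℕ) => (u : Fin n → ℕ)) h) i)
  refine ⟨∑ f : ι, monomial (toExp f) (c f), ?_, ?_, ?_⟩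
  · intro h0
    obtain ⟨f₀, hf₀⟩ := Function.ne_iff.mp hc0
    have := congrArg (coeff (toExp f₀)) h0
    rw [coeff_sum, coeff_zero] at this
    rw [Finset.sum_eq_single f₀ (fun f _ hf => by
      rw [coeff_monomial, if_neg (fun h => hf (htoExp_inj h))]) (by simp)] at this
    rw [coeff_monomial, if_pos rfl] at this
    exact hf₀ this
  · refine (totalDegree_finset_sum _ _).trans (Finset.sup_le fun f _ => ?_)
    refine (totalDegree_monomial_le _ _).trans ?_
    rw [Finsupp.sum_fintype _ _ (fun i => rfl)]
    calc ∑ i, toExp f i ≤ ∑ _i : Fin n, m := by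
          refine Finset.sum_le_sum fun i _ => ?_
          rw [htoExp_apply]
          exact Nat.lt_succ_iff.mp (f i).2
      _ = n * m := by simp [Finset.sum_const, mul_comm]
  · intro x hx
    have hxK : x ∈ KF := hK.mem_toFinset.mpr hx
    have h3 : ∑ f : ι, c f * ∏ i, (x i) ^ (f i : ℕ) = 0 := congrFun hTc ⟨x, hxK⟩
    rw [map_sum, ← h3]
    refine Finset.sum_congr rfl fun f _ => ?_
    rw [eval_monomial, Finsupp.prod_fintype _ _ (fun i => pow_zero _)]
    simp only [htoExp_apply]

lemma eval_sub1 (v w : Fin n → F) (p : MvPolynomial (Fin n) F) (t : F) :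
    Polynomial.eval t
      (aeval (fun j => Polynomial.C (v j) + Polynomial.C (w j) * Polynomial.X) p)
      = eval (v + t • w) p := by
  have h := MvPolynomial.comp_aeval_apply (Polynomial.aeval t : Polynomial F →ₐ[F] F)
    (f := fun j => Polynomial.C (v j) + Polynomial.C (w j) * Polynomial.X) p
  rw [Polynomial.coe_aeval_eq_eval] at h
  rw [h]
  have h2 : (fun i => Polynomial.eval t (Polynomial.C (v i) + Polynomial.C (w i) * Polynomial.X))
      = fun i => (v + t • w) i := by
    funext i
    rw [Polynomial.eval_add, Polynomial.eval_mul, Polynomial.eval_C, Polynomial.eval_C,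
      Polynomial.eval_X, Pi.add_apply, Pi.smul_apply, smul_eq_mul, mul_comm]
  rw [h2, ← MvPolynomial.coe_aeval_eq_eval]
  rfl

lemma natDegree_sub1_le (v w : Fin n → F) (p : MvPolynomial (Fin n) F) :
    (aeval (fun j => Polynomial.C (v j) + Polynomial.C (w j) * Polynomial.X) p).natDegree
      ≤ p.totalDegree := by
  conv_lhs => rw [p.as_sum]
  rw [map_sum]
  refine Polynomial.natDegree_sum_le_of_forall_le _ _ fun α hα => ?_
  rw [aeval_monomial]
  refine (Polynomial.natDegree_mul_le).trans ?_
  have h1 : (algebraMap F (Polynomial F) (coeff α p)).natDegree = 0 := Polynomial.natDegree_C _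
  rw [h1, zero_add]
  refine (Polynomial.natDegree_prod_le _ _).trans ?_
  calc ∑ j ∈ α.support, ((Polynomial.C (v j) + Polynomial.C (w j) * Polynomial.X) ^ α j).natDegree
      ≤ ∑ j ∈ α.support, α j := by
        refine Finset.sum_le_sum fun j _ => ?_
        refine (Polynomial.natDegree_pow_le).trans ?_
        have h2 : (Polynomial.C (v j) + Polynomial.C (w j) * Polynomial.X).natDegree ≤ 1 := by
          refine (Polynomial.natDegree_add_le _ _).trans ?_
          simp only [Polynomial.natDegree_C, max_le_iff]
          exact ⟨Nat.zero_le _, (Polynomial.natDegree_mul_le).trans (by simp)⟩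
        calc α j * (Polynomial.C (v j) + Polynomial.C (w j) * Polynomial.X).natDegree
            ≤ α j * 1 := Nat.mul_le_mul_left _ h2
          _ = α j := Nat.mul_one _
    _ = α.sum (fun _ k => k) := rfl
    _ ≤ p.totalDegree := le_totalDegree hα

lemma derivative_sub1 (v w : Fin n → F) (p : MvPolynomial (Fin n) F) :
    Polynomial.derivative
        (aeval (fun j => Polynomial.C (v j) + Polynomial.C (w j) * Polynomial.X) p)
      = ∑ j, Polynomial.C (w j) *
          aeval (fun j => Polynomial.C (v j) + Polynomial.C (w j) * Polynomial.X)
            (pderiv j p) := by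
  induction p using MvPolynomial.induction_on with
  | C a => simp
  | add p q hp hq =>
    rw [map_add, map_add, hp, hq, ← Finset.sum_add_distrib]
    refine Finset.sum_congr rfl fun j _ => ?_
    rw [map_add, map_add, mul_add]
  | mul_X p i hp =>
    have e1 : Polynomial.derivative (Polynomial.C (v i) + Polynomial.C (w i) * Polynomial.X)
        = Polynomial.C (w i) := by simp
    have hpd : ∀ j : Fin n, pderiv j (p * X i)
        = pderiv j p * X i + p * (if i = j then 1 else 0) := by
      intro j
      rw [pderiv_mul, pderiv_X, Pi.single_apply]
    have e2 : ∀ j, (aeval (fun j => Polynomial.C (v j) + Polynomial.C (w j) * Polynomial.X))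
        ((if i = j then 1 else 0 : MvPolynomial (Fin n) F))
        = if i = j then (1 : Polynomial F) else 0 := fun j => by split <;> simp
    rw [map_mul, aeval_X, Polynomial.derivative_mul, e1, hp]
    have e3 : ∀ j : Fin n,
        (aeval fun j => Polynomial.C (v j) + Polynomial.C (w j) * Polynomial.X)
          (pderiv j (p * X i))
        = (aeval fun j => Polynomial.C (v j) + Polynomial.C (w j) * Polynomial.X) (pderiv j p)
            * (Polynomial.C (v i) + Polynomial.C (w i) * Polynomial.X)
          + (if i = j then
              (aeval fun j => Polynomial.C (v j) + Polynomial.C (w j) * Polynomial.X) p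
            else 0) := by
      intro j
      rw [hpd, map_add, map_mul, map_mul, aeval_X]
      split <;> simp
    simp only [e3, mul_add, Finset.sum_add_distrib, mul_ite, mul_zero, Finset.sum_ite_eq,
      Finset.mem_univ, if_pos]
    rw [Finset.sum_mul]
    refine congrArg₂ (· + ·) ?_ ?_
    · refine congrArg₂ (· + ·) ?_ ?_
      · exact Finset.sum_congr rfl fun j _ => by ring
      · rw [Finset.sum_mul]
        exact Finset.sum_congr rfl fun j _ => by ring
    · exact mul_comm _ _

lemma pderiv_rep (i : Fin n) (p : MvPolynomial (Fin n) F) :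
    pderiv i p = ∑ γ ∈ p.support,
      monomial (γ - Finsupp.single i 1) (coeff γ p * (γ i : F)) := by
  conv_lhs => rw [p.as_sum]
  rw [map_sum]
  exact Finset.sum_congr rfl fun γ _ => pderiv_monomial

lemma sub_single_inj {γ α : Fin n →₀ ℕ} (i : Fin n) (hγ : γ i ≠ 0) (hα : α i ≠ 0)
    (h : γ - Finsupp.single i 1 = α - Finsupp.single i 1) : γ = α := by
  ext j
  have hj := congrFun (congrArg (fun (u : Fin n →₀ ℕ) => (u : Fin n → ℕ)) h) j
  simp only [Finsupp.coe_tsub, Pi.sub_apply, Finsupp.single_apply] at hj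
  by_cases hij : i = j
  · subst hij; rw [if_pos rfl] at hj; omega
  · simpa [hij] using hj

lemma totalDegree_pderiv_le (i : Fin n) (p : MvPolynomial (Fin n) F) :
    (pderiv i p).totalDegree ≤ p.totalDegree - 1 := by
  rw [pderiv_rep]
  refine (totalDegree_finset_sum _ _).trans (Finset.sup_le fun γ hγ => ?_)
  by_cases hγi : γ i = 0
  · simp [hγi]
  · refine (totalDegree_monomial_le _ _).trans ?_
    have hlt : (γ - Finsupp.single i 1).sum (fun _ k => k) < γ.sum (fun _ k => k) := by
      rw [Finsupp.sum_fintype _ _ (fun _ => rfl), Finsupp.sum_fintype _ _ (fun _ => rfl)]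
      refine Finset.sum_lt_sum (fun j _ => ?_) ⟨i, Finset.mem_univ i, ?_⟩
      · simp only [Finsupp.coe_tsub, Pi.sub_apply]
        exact Nat.sub_le _ _
      · simp only [Finsupp.coe_tsub, Pi.sub_apply, Finsupp.single_apply, if_true]
        omega
    have hle : γ.sum (fun _ k => k) ≤ p.totalDegree := le_totalDegree hγ
    have hh : ((γ - Finsupp.single i 1).sum fun _ => id)
        = ((γ - Finsupp.single i 1).sum fun _ k => k) := rfl
    rw [hh]
    omega

lemma cast_eq_zero_of_pderiv_eq_zero {i : Fin n} {p : MvPolynomial (Fin n) F}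
    (hpd : pderiv i p = 0) {α : Fin n →₀ ℕ} (hα : α ∈ p.support) : ((α i : ℕ) : F) = 0 := by
  by_cases hαi : α i = 0
  · rw [hαi, Nat.cast_zero]
  · have h := congrArg (coeff (α - Finsupp.single i 1)) hpd
    rw [pderiv_rep, coeff_sum, coeff_zero] at h
    rw [Finset.sum_eq_single α (fun γ hγ hne => ?_) (fun h => absurd hα h)] at h
    · rw [coeff_monomial, if_pos rfl] at h
      rcases mul_eq_zero.mp h with h' | h'
      · exact absurd h' (mem_support_iff.mp hα)
      · exact h'
    · rw [coeff_monomial]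
      by_cases hγi : γ i = 0
      · simp [hγi]
      · rw [if_neg (fun he => hne (sub_single_inj i hγi hαi he))]

def Hcond (d : ℕ) (K : Set (Fin n → F)) : Prop :=
  ∀ x ∈ K, ∃ b : Fin n → Fin n → F, (Matrix.of b).det ≠ 0 ∧
    ∀ i : Fin n, ∃ v : Fin n → F, x ∈ L v (b i) ∧ d < (L v (b i) ∩ K).ncard

lemma lemB (d : ℕ) : ∀ D : ℕ, ∀ (p : MvPolynomial (Fin n) F) (K : Set (Fin n → F)),
    K.Finite → K.Nonempty → Hcond d K → p.totalDegree ≤ D → p.totalDegree ≤ d →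
    (∀ x ∈ K, eval x p = 0) → p = 0 := by
  intro D
  induction D using Nat.strong_induction_on with
  | _ D IH =>
  intro p K hKfin hKne hH hpD hpd hvan
  classical
  by_contra hp0
  -- Step A: all partial derivatives vanish on K
  have hvander : ∀ x ∈ K, ∀ j, eval x (pderiv j p) = 0 := by
    intro x hx
    obtain ⟨b, hdet, hlines⟩ := hH x hx
    have hsum : ∀ i : Fin n, ∑ j, b i j * eval x (pderiv j p) = 0 := by
      intro i
      obtain ⟨v, ⟨t0, hxv⟩, hcard⟩ := hlines i
      have hq0 : (aeval (fun j => Polynomial.C (v j) + Polynomial.C (b i j) * Polynomial.X) p)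
          = 0 := by
        have hbne : b i ≠ 0 := row_ne_zero hdet i
        obtain ⟨j₀, hj₀⟩ := Function.ne_iff.mp hbne
        have hj₀' : b i j₀ ≠ 0 := hj₀
        have hLK_fin : (L v (b i) ∩ K).Finite := hKfin.inter_of_right _
        set τ : (Fin n → F) → F := fun z => (z j₀ - v j₀) / b i j₀ with hτdef
        have hτ : ∀ t : F, τ (v + t • b i) = t := by
          intro t
          simp only [hτdef, Pi.add_apply, Pi.smul_apply, smul_eq_mul]
          field_simp
          ring
        set T : Finset F := hLK_fin.toFinset.image τ with hTdef
        have hcardT : d < T.card := by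
          have hTc : T.card = (L v (b i) ∩ K).ncard := by
            rw [Set.ncard_eq_toFinset_card _ hLK_fin, hTdef]
            refine Finset.card_image_of_injOn ?_
            intro z hz z' hz' he
            simp only [Finset.mem_coe, Set.Finite.mem_toFinset] at hz hz'
            obtain ⟨t, rfl⟩ := hz.1
            obtain ⟨t', rfl⟩ := hz'.1
            rw [hτ, hτ] at he
            rw [he]
          omega
        refine Polynomial.eq_zero_of_natDegree_lt_card_of_eval_eq_zero' _ T ?_ ?_
        · intro s hs
          rw [hTdef, Finset.mem_image] at hs
          obtain ⟨z, hz, rfl⟩ := hs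
          rw [Set.Finite.mem_toFinset] at hz
          obtain ⟨⟨t, rfl⟩, hzK⟩ := hz
          rw [hτ, eval_sub1]
          exact hvan _ hzK
        · exact lt_of_le_of_lt ((natDegree_sub1_le _ _ _).trans hpd) hcardT
      have hder : (0 : Polynomial F) = ∑ j, Polynomial.C (b i j) *
          aeval (fun j => Polynomial.C (v j) + Polynomial.C (b i j) * Polynomial.X)
            (pderiv j p) := by
        rw [← derivative_sub1, hq0, Polynomial.derivative_zero]
      have he := congrArg (Polynomial.eval t0) hder
      rw [Polynomial.eval_zero, Polynomial.eval_finset_sum] at he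
      rw [he]
      refine Finset.sum_congr rfl fun j _ => ?_
      rw [Polynomial.eval_mul, Polynomial.eval_C, eval_sub1, ← hxv]
    have hg := vec_eq_zero hdet hsum
    intro j
    exact congrFun hg j
  -- Step B: case on degree
  by_cases hdeg0 : p.totalDegree = 0
  · -- p is a nonzero constant vanishing at a point: contradiction
    obtain ⟨x₀, hx₀⟩ := hKne
    have hall := (totalDegree_eq_zero_iff _ p).mp hdeg0
    obtain ⟨α₀, hα₀⟩ := support_nonempty.mpr hp0
    have hα₀0 : α₀ = 0 := by
      ext i
      exact hall α₀ hα₀ i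
    have hsupp : p.support = {0} := by
      apply Finset.eq_singleton_iff_unique_mem.mpr
      refine ⟨hα₀0 ▸ hα₀, fun β hβ => ?_⟩
      ext i
      exact hall β hβ i
    have heval := hvan x₀ hx₀
    rw [eval_eq', hsupp, Finset.sum_singleton] at heval
    simp only [Finsupp.coe_zero, Pi.zero_apply, pow_zero, Finset.prod_const_one,
      mul_one] at heval
    exact (mem_support_iff.mp (hα₀0 ▸ hα₀)) heval
  · have hdeg1 : 1 ≤ p.totalDegree := Nat.one_le_iff_ne_zero.mpr hdeg0
    have hD1 : 1 ≤ D := le_trans hdeg1 hpD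
    -- all partial derivatives are zero
    have hpd0 : ∀ j, pderiv j p = 0 := by
      intro j
      have h1 := totalDegree_pderiv_le j p
      exact IH (D - 1) (by omega) (pderiv j p) K hKfin hKne hH (by omega) (by omega)
        (fun x hx => hvander x hx j)
    have hdvd : ∀ α ∈ p.support, ∀ i, ((α i : ℕ) : F) = 0 :=
      fun α hα i => cast_eq_zero_of_pderiv_eq_zero (hpd0 i) hα
    haveI : CharP F (ringChar F) := ringChar.charP F
    rcases CharP.char_is_prime_or_zero F (ringChar F) with he | he
    · -- prime characteristic: Frobenius descent
      set e := ringChar F with hee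
      have he2 : 2 ≤ e := he.two_le
      have hepos : 0 < e := by omega
      have hdvd' : ∀ α ∈ p.support, ∀ i, e ∣ α i :=
        fun α hα i => (CharP.cast_eq_zero_iff F e (α i)).mp (hdvd α hα i)
      set dv : (Fin n →₀ ℕ) → (Fin n →₀ ℕ) :=
        fun α => Finsupp.equivFunOnFinite.symm (fun i => α i / e) with hdvdef
      have hdv_apply : ∀ α i, dv α i = α i / e := fun _ _ => rfl
      have hinj : Set.InjOn dv p.support := by
        intro α hα β hβ h
        ext i
        have h1 : α i / e = β i / e :=
          congrFun (congrArg (fun (u : Fin n →₀ ℕ) => (u : Fin n → ℕ)) h) i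
        obtain ⟨a, ha⟩ := hdvd' α hα i
        obtain ⟨c, hc⟩ := hdvd' β hβ i
        rw [ha, hc, Nat.mul_div_cancel_left _ hepos, Nat.mul_div_cancel_left _ hepos] at h1
        rw [ha, hc, h1]
      set q : MvPolynomial (Fin n) F := ∑ α ∈ p.support, monomial (dv α) (coeff α p) with hqdef
      obtain ⟨α₀, hα₀⟩ := support_nonempty.mpr hp0
      have hq0 : q ≠ 0 := by
        intro h
        have hco := congrArg (coeff (dv α₀)) h
        rw [hqdef, coeff_sum, coeff_zero,
          Finset.sum_eq_single α₀
            (fun γ hγ hne => by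
              rw [coeff_monomial, if_neg (fun hh => hne (hinj hγ hα₀ hh))])
            (fun hh => absurd hα₀ hh)] at hco
        rw [coeff_monomial, if_pos rfl] at hco
        exact (mem_support_iff.mp hα₀) hco
      have hdvsum : ∀ α ∈ p.support,
          ((dv α).sum fun _ k => k) * e = α.sum fun _ k => k := by
        intro α hα
        rw [Finsupp.sum_fintype _ _ (fun _ => rfl), Finsupp.sum_fintype _ _ (fun _ => rfl),
          Finset.sum_mul]
        refine Finset.sum_congr rfl fun i _ => ?_
        rw [hdv_apply, Nat.div_mul_cancel (hdvd' α hα i)]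
      have hdegq : q.totalDegree ≤ p.totalDegree / 2 := by
        rw [hqdef]
        refine (totalDegree_finset_sum _ _).trans (Finset.sup_le fun α hα => ?_)
        refine (totalDegree_monomial_le _ _).trans ?_
        have h1 := hdvsum α hα
        have h2 : (α.sum fun _ k => k) ≤ p.totalDegree := le_totalDegree hα
        have hh : ((dv α).sum fun _ => id) = ((dv α).sum fun _ k => k) := rfl
        rw [hh]
        have h3 : ((dv α).sum fun _ k => k) * 2 ≤ ((dv α).sum fun _ k => k) * e :=
          Nat.mul_le_mul_left _ he2
        exact (Nat.le_div_iff_mul_le (by omega)).mpr (by omega)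
      haveI : Fact e.Prime := ⟨he⟩
      haveI : ExpChar F e := ExpChar.prime he
      set φ : (Fin n → F) → (Fin n → F) := fun z i => z i ^ e with hφdef
      have hpow : ∀ (a c t : F), (a + t * c) ^ e = a ^ e + t ^ e * c ^ e := by
        intro a c t
        rw [add_pow_char, mul_pow]
      have hφinj : Function.Injective φ := by
        intro z z' h
        funext i
        have : frobenius F e (z i) = frobenius F e (z' i) := congrFun h i
        exact frobenius_inj F e this
      have hφline : ∀ (v w : Fin n → F) (t : F), φ (v + t • w)
          = φ v + (t ^ e) • (fun j => w j ^ e) := by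
        intro v w t
        funext j
        simp only [hφdef, Pi.add_apply, Pi.smul_apply, smul_eq_mul]
        exact hpow (v j) (w j) t
      set K' := φ '' K with hK'def
      have hvan' : ∀ y ∈ K', eval y q = 0 := by
        rintro y ⟨x, hxK, rfl⟩
        rw [hqdef, map_sum]
        have hterm : ∀ α ∈ p.support,
            eval (φ x) (monomial (dv α) (coeff α p)) = coeff α p * ∏ i, x i ^ α i := by
          intro α hα
          rw [eval_monomial, Finsupp.prod_fintype _ _ (fun _ => pow_zero _)]
          congr 1
          refine Finset.prod_congr rfl fun i _ => ?_
          rw [hdv_apply]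
          show (x i ^ e) ^ (α i / e) = x i ^ α i
          rw [← pow_mul, Nat.mul_div_cancel' (hdvd' α hα i)]
        rw [Finset.sum_congr rfl hterm, ← eval_eq']
        exact hvan x hxK
      have hH' : Hcond d K' := by
        rintro y ⟨x, hxK, rfl⟩
        obtain ⟨b, hdet, hlines⟩ := hH x hxK
        refine ⟨fun i j => b i j ^ e, ?_, fun i => ?_⟩
        · have hmap : (Matrix.of (fun i j => b i j ^ e))
              = (frobenius F e).mapMatrix (Matrix.of b) := by
            ext i j
            rfl
          rw [hmap, ← RingHom.map_det]
          show ((Matrix.of b).det) ^ e ≠ 0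
          exact pow_ne_zero _ hdet
        · obtain ⟨v, ⟨t0, hxv⟩, hcard⟩ := hlines i
          refine ⟨φ v, ⟨t0 ^ e, ?_⟩, ?_⟩
          · rw [hxv, hφline]
          · have hsub : φ '' (L v (b i) ∩ K)
                ⊆ L (φ v) (fun j => b i j ^ e) ∩ K' := by
              rintro _ ⟨z, ⟨⟨t, rfl⟩, hzK⟩, rfl⟩
              exact ⟨⟨t ^ e, hφline v (b i) t⟩, Set.mem_image_of_mem φ hzK⟩
            calc d < (L v (b i) ∩ K).ncard := hcard
              _ = (φ '' (L v (b i) ∩ K)).ncard :=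
                  (Set.ncard_image_of_injective _ hφinj).symm
              _ ≤ (L (φ v) (fun j => b i j ^ e) ∩ K').ncard :=
                  Set.ncard_le_ncard hsub ((hKfin.image φ).inter_of_right _)
      have hdegq2 : q.totalDegree ≤ D - 1 := by
        have := Nat.div_lt_self (Nat.lt_of_lt_of_le Nat.zero_lt_one hdeg1) (by omega : 1 < 2)
        omega
      have hdegq3 : q.totalDegree ≤ d := by
        have := Nat.div_le_self p.totalDegree 2
        omega
      exact hq0 (IH (D - 1) (by omega) q K' (hKfin.image φ) (hKne.image φ) hH' hdegq2
        hdegq3 hvan')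
    · -- characteristic zero
      haveI : CharP F 0 := he ▸ ringChar.charP F
      haveI : CharZero F := CharP.charP_to_charZero F
      obtain ⟨α, hα, hαsum⟩ := p.support.exists_mem_eq_sup (support_nonempty.mpr hp0)
        (fun s => s.sum fun _ e => e)
      have hα0 : α = 0 := by
        ext i
        have h7 : ((α i : ℕ) : F) = ((0 : ℕ) : F) := by rw [hdvd α hα i, Nat.cast_zero]
        exact Nat.cast_injective h7
      rw [hα0] at hαsum
      have h6 : p.totalDegree = ((0 : Fin n →₀ ℕ).sum fun _ e => e) := hαsum
      simp only [Finsupp.sum_zero_index] at h6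
      omega

theorem stmt9' (n : ℕ) (hn : 3 ≤ n) :
    ∃ C : ℝ, ∀ (F : Type) [Field F] (𝔏 : Finset (Set (Fin n → F))) (K : Set (Fin n → F)),
      (∀ l ∈ 𝔏, IsLine F l) → (∀ x ∈ K, IsJoint F ↑𝔏 x) → K.Nonempty →
      ∃ l ∈ 𝔏, ((l ∩ K).ncard : ℝ) ≤ C * (K.ncard : ℝ) ^ (1 / (n : ℝ)) := by
  refine ⟨n, ?_⟩
  intro F _ 𝔏 K hlines hjoints hKne
  have hn0 : (n : ℝ) ≠ 0 := Nat.cast_ne_zero.mpr (by omega)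
  have hKfin : K.Finite := K_finite hn 𝔏 hlines K hjoints
  set N := K.ncard with hN
  have hN1 : 1 ≤ N := (Set.ncard_pos hKfin).mpr hKne
  set r : ℝ := (N : ℝ) ^ (1 / (n : ℝ)) with hr
  have hr0 : (0 : ℝ) ≤ r := Real.rpow_nonneg (Nat.cast_nonneg N) _
  set m := ⌊r⌋₊ with hm
  have hrn : (N : ℝ) = r ^ (n : ℕ) := by
    rw [hr, ← Real.rpow_natCast ((N : ℝ) ^ (1 / (n : ℝ))) n,
      ← Real.rpow_mul (Nat.cast_nonneg N), one_div, inv_mul_cancel₀ hn0, Real.rpow_one]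
  have hmN : N < (m + 1) ^ n := by
    have h1 : r < (m : ℝ) + 1 := Nat.lt_floor_add_one r
    have h2 : (N : ℝ) < ((m : ℝ) + 1) ^ (n : ℕ) := by
      rw [hrn]
      exact pow_lt_pow_left₀ h1 hr0 (by omega)
    have h3 : (((m + 1) ^ n : ℕ) : ℝ) = ((m : ℝ) + 1) ^ (n : ℕ) := by push_cast; ring
    exact_mod_cast h3 ▸ h2
  set d := n * m with hd
  by_cases hall : ∀ l ∈ 𝔏, d < (l ∩ K).ncard
  · exfalso
    obtain ⟨p, hp0, hpdeg, hpvan⟩ := exists_low_degree_vanishing (by omega) m K hKfin hmN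
    refine hp0 (lemB d p.totalDegree p K hKfin hKne ?_ le_rfl hpdeg hpvan)
    intro x hx
    obtain ⟨l, hlinj, hlmem, hxl, b, hdir, hspan⟩ := hjoints x hx
    refine ⟨b, det_ne_zero_of_span hspan, fun i => ?_⟩
    obtain ⟨hbne, v, hlv⟩ := hdir i
    have hLl : L v (b i) = l i := hlv.symm
    refine ⟨v, ?_, ?_⟩
    · rw [hLl]
      exact hxl i
    · rw [hLl]
      exact hall (l i) (hlmem i)
  · push_neg at hall
    obtain ⟨l, hl, hlle⟩ := hall
    refine ⟨l, hl, ?_⟩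
    have hm_le : (m : ℝ) ≤ r := Nat.floor_le hr0
    calc ((l ∩ K).ncard : ℝ) ≤ (d : ℝ) := by exact_mod_cast hlle
      _ = (n : ℝ) * m := by rw [hd]; push_cast; ring
      _ ≤ (n : ℝ) * r := mul_le_mul_of_nonneg_left hm_le (Nat.cast_nonneg n)
      _ = (n : ℝ) * (N : ℝ) ^ (1 / (n : ℝ)) := by rw [hr]

end JL

/-- For `n ≥ 3` there is a constant `C` depending only on `n` such that for any field
`F`, any finite collection `𝔏` of lines in `F^n` and any nonempty subset `K` of the
joints of `𝔏`, some line `l ∈ 𝔏` satisfies `|l ∩ K| ≤ C·|K|^{1/n}`. -/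
theorem stmt9 (n : ℕ) (hn : 3 ≤ n) :
    ∃ C : ℝ, ∀ (F : Type) [Field F] (𝔏 : Finset (Set (Fin n → F))) (K : Set (Fin n → F)),
      (∀ l ∈ 𝔏, IsLine F l) → (∀ x ∈ K, IsJoint F ↑𝔏 x) → K.Nonempty →
      ∃ l ∈ 𝔏, ((l ∩ K).ncard : ℝ) ≤ C * (K.ncard : ℝ) ^ (1 / (n : ℝ)) := by
  exact JL.stmt9' n hn
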